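/- Let k ≥ 1, let 0 ≤ r ≤ k, and let 1 ≤ n ≤ ⌈k/2⌉. Then every simple graph that is [n, k, r]-partite with respect to a partition P of its vertex set has an independent covering with respect to P. -/

import Mathlib

/-- `G` admits two orthogonal proper colourings, each using at most `k` colours:
two proper colourings such that no two distinct vertices receive the same pair of colours. -/
def HasOrthColoring {V : Type*} (G : SimpleGraph V) (k : ℕ) : Prop :=
  ∃ c₁ c₂ : V → Fin k,
    (∀ ⦃u v⦄, G.Adj u v → c₁ u ≠ c₁ v) ∧
    (∀ ⦃u v⦄, G.Adj u v → c₂ u ≠ c₂ v) ∧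
    Function.Injective fun v => (c₁ v, c₂ v)

/-- `G` is `[n,k,r]`-partite with respect to the partition `A` of its vertex set:
the classes `A i` partition the vertices, each class has size `k` and is an independent set,
and between every pair of distinct classes there are exactly `r` edges, which are
pairwise non-adjacent (they form a matching). -/
def IsPartiteNKR {V : Type*} (G : SimpleGraph V) (n k r : ℕ) (A : Fin n → Finset V) : Prop :=
  (∀ v : V, ∃! i, v ∈ A i) ∧
  (∀ i, (A i).card = k) ∧
  (∀ i, ∀ u ∈ A i, ∀ v ∈ A i, ¬ G.Adj u v) ∧
  ∀ i j, i ≠ j →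
    {p : V × V | p.1 ∈ A i ∧ p.2 ∈ A j ∧ G.Adj p.1 p.2}.ncard = r ∧
    ∀ p q : V × V,
      p.1 ∈ A i → p.2 ∈ A j → G.Adj p.1 p.2 →
      q.1 ∈ A i → q.2 ∈ A j → G.Adj q.1 q.2 →
      p ≠ q → p.1 ≠ q.1 ∧ p.2 ≠ q.2

/-- `T` is an independent transversal of `G` with respect to the partition `A`:
an independent set containing exactly one vertex from each class. -/
def IsIndepTransversal {V : Type*} {n : ℕ} (G : SimpleGraph V) (A : Fin n → Finset V)
    (T : Finset V) : Prop :=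
  (∀ u ∈ T, ∀ v ∈ T, ¬ G.Adj u v) ∧ ∀ i, ∃! v, v ∈ T ∧ v ∈ A i

/-- `G` has an independent covering with respect to the partition `A`:
a collection of pairwise disjoint independent transversals spanning all vertices. -/
def HasIndepCovering {V : Type*} {n : ℕ} (G : SimpleGraph V) (A : Fin n → Finset V) : Prop :=
  ∃ (m : ℕ) (T : Fin m → Finset V),
    (∀ j, IsIndepTransversal G A (T j)) ∧
    (Pairwise fun j j' => Disjoint (T j) (T j')) ∧
    ∀ v : V, ∃ j, v ∈ T j

/-- For `1 ≤ n ≤ ⌈k/2⌉` and `r ≤ k`, every `[n, k, r]`-partite graph has an independent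
covering with respect to its given `[n, k, r]`-partition. -/
lemma exists_injOn_avoid {V : Type} [DecidableEq V] {k m : ℕ} (S : Finset V) (hS : S.card = k)
    (B : V → Finset (Fin k)) [∀ v c, Decidable (c ∈ B v)]
    (hB : ∀ v ∈ S, (B v).card ≤ m)
    (hB' : ∀ c : Fin k, (S.filter (fun v => c ∈ B v)).card ≤ m)
    (hm : 2 * m + 1 ≤ k) :
    ∃ g : V → Fin k, Set.InjOn g ↑S ∧ ∀ v ∈ S, g v ∉ B v := by
  classical
  set t : {x // x ∈ S} → Finset (Fin k) := fun v => Finset.univ \ B v.1 with ht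
  have hall : ∀ s : Finset {x // x ∈ S}, s.card ≤ (s.biUnion t).card := by
    intro s
    rcases s.eq_empty_or_nonempty with rfl | ⟨v, hv⟩
    · simp
    by_cases hsc : s.card ≤ k - m
    · have h1 : (t v).card = k - (B v.1).card := by
        rw [ht]; rw [Finset.card_sdiff_of_subset (Finset.subset_univ _)]; simp
      have h2 : k - m ≤ (t v).card := by
        rw [h1]; exact Nat.sub_le_sub_left (hB v.1 v.2) k
      exact hsc.trans (h2.trans (Finset.card_le_card (Finset.subset_biUnion_of_mem t hv)))
    · push_neg at hsc
      have hsub : (Finset.univ : Finset (Fin k)) ⊆ s.biUnion t := by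
        intro c _
        by_contra hc
        have hall' : ∀ v' ∈ s, c ∈ B v'.1 := by
          intro v' hv'
          by_contra hc'
          exact hc (Finset.mem_biUnion.2 ⟨v', hv', by simp [ht, hc']⟩)
        have : s.image (Subtype.val) ⊆ S.filter (fun v => c ∈ B v) := by
          intro x hx
          obtain ⟨v', hv', rfl⟩ := Finset.mem_image.1 hx
          exact Finset.mem_filter.2 ⟨v'.2, hall' v' hv'⟩
        have h3 : s.card ≤ m := by
          rw [← Finset.card_image_of_injective s Subtype.val_injective]
          exact (Finset.card_le_card this).trans (hB' c)
        omega
      have : (s.biUnion t).card = k := by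
        rw [Finset.univ_subset_iff.1 hsub]; simp
      rw [this]
      calc s.card ≤ Fintype.card {x // x ∈ S} := Finset.card_le_univ s
        _ = k := by simp [hS]
  obtain ⟨f, hfinj, hf⟩ := (Finset.all_card_le_biUnion_card_iff_exists_injective t).1 hall
  refine ⟨fun v => if hv : v ∈ S then f ⟨v, hv⟩ else ⟨0, by omega⟩, ?_, ?_⟩
  · intro a ha b hb hab
    simp only [Finset.mem_coe] at ha hb
    simp only [dif_pos ha, dif_pos hb] at hab
    exact congrArg Subtype.val (hfinj hab)
  · intro v hv
    simp only [dif_pos hv]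
    have := hf ⟨v, hv⟩
    simp [ht] at this
    exact this

theorem indepCovering_of_nkr_partite (k r n : ℕ) (hk : 1 ≤ k) (hr : r ≤ k)
    (hn : 1 ≤ n) (hn' : n ≤ (k + 1) / 2) {V : Type}
    (G : SimpleGraph V) (A : Fin n → Finset V) (h : IsPartiteNKR G n k r A) :
    HasIndepCovering G A := by
  classical
  obtain ⟨hpart, hcard, hindep, hmatch⟩ := h
  have huniq1 : ∀ (i j : Fin n), i ≠ j → ∀ v ∈ A i, ∀ u ∈ A j, ∀ u' ∈ A j,
      G.Adj v u → G.Adj v u' → u = u' := by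
    intro i j hij v hv u hu u' hu' ha ha'
    by_contra hne
    exact ((hmatch i j hij).2 (v, u) (v, u') hv hu ha hv hu' ha'
      (fun hEq => hne (congrArg Prod.snd hEq))).1 rfl
  have huniq2 : ∀ (i j : Fin n), i ≠ j → ∀ u ∈ A j, ∀ v ∈ A i, ∀ v' ∈ A i,
      G.Adj v u → G.Adj v' u → v = v' := by
    intro i j hij u hu v hv v' hv' ha ha'
    by_contra hne
    exact ((hmatch i j hij).2 (v, u) (v', u) hv hu ha hv' hu ha'
      (fun hEq => hne (congrArg Prod.fst hEq))).2 rfl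
  have hk2n : 2 * n ≤ k + 1 := by
    have := (Nat.le_div_iff_mul_le (by norm_num : 0 < 2)).1 hn'
    omega
  have key : ∀ i : ℕ, ∃ f : Fin n → V → Fin k,
      (∀ j : Fin n, (j : ℕ) < i → Set.InjOn (f j) ↑(A j)) ∧
      (∀ j j' : Fin n, (j' : ℕ) < (j : ℕ) → (j : ℕ) < i →
        ∀ v ∈ A j, ∀ u ∈ A j', G.Adj v u → f j v ≠ f j' u) := by
    intro i
    induction i with
    | zero =>
      exact ⟨fun _ _ => ⟨0, hk⟩, fun j hj => absurd hj (by omega),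
        fun j j' _ hj => absurd hj (by omega)⟩
    | succ i ih =>
      obtain ⟨f, hinj, hcross⟩ := ih
      by_cases hi : i < n
      · set ii : Fin n := ⟨i, hi⟩ with hii
        set filt : Finset (Fin n) := Finset.univ.filter (fun j : Fin n => (j : ℕ) < i)
          with hfilt
        set B : V → Finset (Fin k) := fun v =>
          filt.biUnion (fun j => ((A j).filter (fun u => G.Adj v u)).image (f j)) with hBdef
        have hfne : ∀ j ∈ filt, j ≠ ii := by
          intro j hj
          simp only [hfilt, Finset.mem_filter] at hj
          intro hEq; rw [hEq] at hj; simp [hii] at hj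
        have hfiltcard : filt.card ≤ n - 1 := by
          have h1 : filt.card ≤ (Finset.range i).card := by
            refine Finset.card_le_card_of_injOn (fun j => (j : ℕ)) ?_ ?_
            · intro j hj
              simp only [hfilt, Finset.mem_filter] at hj
              exact Finset.mem_range.2 (by simpa using hj)
            · exact fun a _ b _ hab => Fin.val_injective hab
          rw [Finset.card_range] at h1
          omega
        have hBcard : ∀ v ∈ A ii, (B v).card ≤ n - 1 := by
          intro v hv
          calc (B v).card
              ≤ ∑ j ∈ filt, (((A j).filter (fun u => G.Adj v u)).image (f j)).card :=
                Finset.card_biUnion_le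
            _ ≤ ∑ _j ∈ filt, 1 := by
                apply Finset.sum_le_sum
                intro j hj
                apply le_trans Finset.card_image_le
                apply Finset.card_le_one.2
                intro a ha b hb
                simp only [Finset.mem_filter] at ha hb
                exact huniq1 ii j (hfne j hj).symm v hv a ha.1 b hb.1 ha.2 hb.2
            _ = filt.card := by simp
            _ ≤ n - 1 := hfiltcard
        have hBcard' : ∀ c : Fin k, ((A ii).filter (fun v => c ∈ B v)).card ≤ n - 1 := by
          intro c
          have hsub : (A ii).filter (fun v => c ∈ B v) ⊆
              filt.biUnion (fun j => (A ii).filter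
                (fun v => ∃ u ∈ A j, G.Adj v u ∧ f j u = c)) := by
            intro v hv
            simp only [Finset.mem_filter, hBdef, Finset.mem_biUnion, Finset.mem_image] at hv
            obtain ⟨hvA, j, hjf, u, ⟨huA, huadj⟩, hfu⟩ := hv
            exact Finset.mem_biUnion.2 ⟨j, hjf,
              Finset.mem_filter.2 ⟨hvA, u, huA, huadj, hfu⟩⟩
          calc ((A ii).filter (fun v => c ∈ B v)).card
              ≤ _ := Finset.card_le_card hsub
            _ ≤ ∑ j ∈ filt, ((A ii).filter
                (fun v => ∃ u ∈ A j, G.Adj v u ∧ f j u = c)).card :=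
                Finset.card_biUnion_le
            _ ≤ ∑ _j ∈ filt, 1 := by
                apply Finset.sum_le_sum
                intro j hj
                apply Finset.card_le_one.2
                intro a ha b hb
                simp only [Finset.mem_filter] at ha hb
                obtain ⟨haA, u, hu, hadj, hfu⟩ := ha
                obtain ⟨hbA, u', hu', hadj', hfu'⟩ := hb
                have hjlt : (j : ℕ) < i := by
                  simp only [hfilt, Finset.mem_filter] at hj; exact hj.2
                have : u = u' := hinj j hjlt hu hu' (hfu.trans hfu'.symm)
                subst this
                exact huniq2 ii j (hfne j hj).symm u hu a haA b hbA hadj hadj'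
            _ = filt.card := by simp
            _ ≤ n - 1 := hfiltcard
        obtain ⟨g, hginj, hg⟩ := exists_injOn_avoid (A ii) (hcard ii) B hBcard hBcard'
          (by omega)
        refine ⟨Function.update f ii g, ?_, ?_⟩
        · intro j hj
          by_cases hje : j = ii
          · subst hje; rw [Function.update_self]; exact hginj
          · rw [Function.update_of_ne hje]
            have : (j : ℕ) ≠ i := fun hEq => hje (Fin.ext hEq)
            exact hinj j (by omega)
        · intro j j' hjj' hj v hv u hu hadj
          have hj'ne : j' ≠ ii := by
            intro hEq
            have : (j' : ℕ) = i := by rw [hEq]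
            have := j.isLt
            omega
          rw [Function.update_of_ne hj'ne]
          by_cases hje : j = ii
          · subst hje
            rw [Function.update_self]
            intro hEq
            apply hg v hv
            rw [hEq, hBdef]
            refine Finset.mem_biUnion.2 ⟨j', ?_, Finset.mem_image.2
              ⟨u, Finset.mem_filter.2 ⟨hu, hadj⟩, rfl⟩⟩
            simp only [hfilt, Finset.mem_filter]
            exact ⟨Finset.mem_univ _, hjj'⟩
          · rw [Function.update_of_ne hje]
            have : (j : ℕ) ≠ i := fun hEq => hje (Fin.ext hEq)
            exact hcross j j' hjj' (by omega) v hv u hu hadj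
      · refine ⟨f, fun j _ => hinj j ?_, fun j j' h1 _ => hcross j j' h1 ?_⟩
        · have := j.isLt; omega
        · have := j.isLt; omega
  obtain ⟨f, hinjn, hcrossn⟩ := key n
  have hinj : ∀ j : Fin n, Set.InjOn (f j) ↑(A j) := fun j => hinjn j j.isLt
  have hcross : ∀ j j' : Fin n, (j' : ℕ) < (j : ℕ) →
      ∀ v ∈ A j, ∀ u ∈ A j', G.Adj v u → f j v ≠ f j' u :=
    fun j j' h1 => hcrossn j j' h1 j.isLt
  have hclex : ∀ v : V, ∃ i, v ∈ A i := fun v => (hpart v).exists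
  set cl : V → Fin n := fun v => (hclex v).choose with hcl
  have hclmem : ∀ v, v ∈ A (cl v) := fun v => (hclex v).choose_spec
  have clEq : ∀ v (i : Fin n), v ∈ A i → cl v = i := by
    intro v i hv
    exact ((hpart v).unique (hclmem v) hv)
  set c : V → Fin k := fun v => f (cl v) v with hc
  set S : Finset V := Finset.univ.biUnion A with hSdef
  have hS : ∀ v : V, v ∈ S :=
    fun v => Finset.mem_biUnion.2 ⟨cl v, Finset.mem_univ _, hclmem v⟩
  set T : Fin k → Finset V := fun j => S.filter (fun v => c v = j) with hT
  have hcv : ∀ v (i : Fin n), v ∈ A i → c v = f i v := by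
    intro v i hv
    rw [hc]
    simp only
    rw [clEq v i hv]
  refine ⟨k, T, ?_, ?_, fun v => ⟨c v, Finset.mem_filter.2 ⟨hS v, rfl⟩⟩⟩
  · intro j
    constructor
    · intro u hu v hv hadj
      have hcu : c u = j := (Finset.mem_filter.1 hu).2
      have hcv' : c v = j := (Finset.mem_filter.1 hv).2
      by_cases hcc : cl u = cl v
      · exact hindep (cl u) u (hclmem u) v (by rw [hcc]; exact hclmem v) hadj
      · rcases Nat.lt_or_ge (cl u : ℕ) (cl v : ℕ) with hlt | hge
        · exact hcross (cl v) (cl u) hlt v (hclmem v) u (hclmem u) hadj.symm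
            (hcv'.trans hcu.symm)
        · have hlt : (cl v : ℕ) < (cl u : ℕ) := by
            rcases Nat.lt_or_ge (cl v : ℕ) (cl u : ℕ) with h1 | h1
            · exact h1
            · exact absurd (Fin.ext (le_antisymm h1 hge)) hcc
          exact hcross (cl u) (cl v) hlt u (hclmem u) v (hclmem v) hadj
            (hcu.trans hcv'.symm)
    · intro i
      have himg : (A i).image (f i) = Finset.univ := by
        apply Finset.eq_univ_of_card
        rw [Finset.card_image_of_injOn (hinj i), hcard i, Fintype.card_fin]
      have hjmem : j ∈ (A i).image (f i) := himg ▸ Finset.mem_univ j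
      obtain ⟨v, hv, hfv⟩ := Finset.mem_image.1 hjmem
      refine ⟨v, ⟨Finset.mem_filter.2 ⟨hS v, by rw [hcv v i hv]; exact hfv⟩, hv⟩, ?_⟩
      rintro v' ⟨hv'T, hv'A⟩
      have : f i v' = j := by
        rw [← hcv v' i hv'A]
        exact (Finset.mem_filter.1 hv'T).2
      exact hinj i hv'A hv (this.trans hfv.symm)
  · intro j j' hne
    refine Finset.disjoint_left.2 ?_
    intro v hv hv'
    exact hne ((Finset.mem_filter.1 hv).2.symm.trans (Finset.mem_filter.1 hv').2)
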